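/- (a) Define f(x) := (1/x + 1)·ln(1 + x) − 1 for x > 0. Then for every x ∈ (0, 3/2), 0 < f(x) ≤ 1 − e^{−x/2} < 1. (b) Define s(x) := (1/x)·ln(1/(1−x)) − 1 for x ∈ (0,1). Then for every x ∈ (0, 3/5), 0 < s(x) ≤ 1 − exp(−(1/2)·x/(1−x)) < 1. -/

import Mathlib

open Real Finset

private lemma exp_ub {x : ℝ} (h0 : 0 ≤ x) (h1 : x ≤ 3/2) :
    Real.exp (-x/2) ≤
      1 - x/2 + x^2/8 - x^3/48 + x^4/384 - x^5/3840 + x^6/46080 + x^7/564480 := by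
  have habs : |(-x/2)| ≤ 1 := by
    rw [abs_le]; constructor <;> nlinarith
  have h := Real.exp_bound habs (n := 7) (by norm_num)
  have hsum : (∑ m ∈ Finset.range 7, (-x/2) ^ m / m.factorial)
      = 1 - x/2 + x^2/8 - x^3/48 + x^4/384 - x^5/3840 + x^6/46080 := by
    simp [Finset.sum_range_succ, Nat.factorial]
    ring
  have habs2 : |(-x/2)| = x/2 := by
    rw [abs_of_nonpos (by linarith : -x/2 ≤ 0)]; ring
  rw [hsum, habs2] at h
  have h2 := (abs_le.mp h).2
  norm_num [Nat.factorial] at h2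
  nlinarith [h2]

private lemma log_ub {w : ℝ} (h0 : 0 ≤ w) (h1 : w < 1) :
    -Real.log (1 - w) ≤
      w^1/1 + w^2/2 + w^3/3 + w^4/4 + w^5/5 + w^6/6 + w^7/7 + w^8/8 + w^9/9 + w^10/10 + w^11/11 + w^12/12 + w^13/13 + w^14/14 + w^15/15 + w^16/16 + w^17/17 + w^18/18 + w^19/19 + w^20/20 + w^21/(1-w) := by
  have habs : |w| < 1 := by rwa [abs_of_nonneg h0]
  have h := Real.abs_log_sub_add_sum_range_le habs 20
  rw [abs_of_nonneg h0] at h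
  have hsum : (∑ i ∈ Finset.range 20, w ^ (i + 1) / (i + 1))
      = w^1/1 + w^2/2 + w^3/3 + w^4/4 + w^5/5 + w^6/6 + w^7/7 + w^8/8 + w^9/9 + w^10/10 + w^11/11 + w^12/12 + w^13/13 + w^14/14 + w^15/15 + w^16/16 + w^17/17 + w^18/18 + w^19/19 + w^20/20 := by
    simp [Finset.sum_range_succ]
    norm_num
  rw [hsum] at h
  have h2 := (abs_le.mp h).1
  linarith

set_option maxHeartbeats 1000000 in
private lemma Q_nonneg {x : ℝ} (hx : 0 ≤ x) (hx2 : x ≤ 3/2) :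
    0 ≤ (4194304/2541865828329 : ℝ) * x^0 * (3/2 - x)^25 +
      (221249536/2541865828329 : ℝ) * x^1 * (3/2 - x)^24 +
      (9287303168/4236443047215 : ℝ) * x^2 * (3/2 - x)^23 +
      (445804036096/12709329141645 : ℝ) * x^3 * (3/2 - x)^22 +
      (35605778372608/88965303991515 : ℝ) * x^4 * (3/2 - x)^21 +
      (719241601193984/207585709313535 : ℝ) * x^5 * (3/2 - x)^20 +
      (2944757133417472/124551425588121 : ℝ) * x^6 * (3/2 - x)^19 +
      (81211522743907328/622757127940605 : ℝ) * x^7 * (3/2 - x)^18 +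
      (450241837502571904/761147600816295 : ℝ) * x^8 * (3/2 - x)^17 +
      (15299124877930544768/6850328407346655 : ℝ) * x^9 * (3/2 - x)^16 +
      (126035653262621657344/17810853859101303 : ℝ) * x^10 * (3/2 - x)^15 +
      (112306433861518728064/5936951286367101 : ℝ) * x^11 * (3/2 - x)^14 +
      (3810286109144535111472/89054269295506515 : ℝ) * x^12 * (3/2 - x)^13 +
      (7297264875374474797744/89054269295506515 : ℝ) * x^13 * (3/2 - x)^12 +
      (66963991532699366596648/504640859341203585 : ℝ) * x^14 * (3/2 - x)^11 +
      (3224959146597694724248/17810853859101303 : ℝ) * x^15 * (3/2 - x)^10 +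
      (1190602078002985292830061/5752905796489720869 : ℝ) * x^16 * (3/2 - x)^9 +
      (627729671898613305850043/3196058775827622705 : ℝ) * x^17 * (3/2 - x)^8 +
      (4396413250462462853708444/28764528982448604345 : ℝ) * x^18 * (3/2 - x)^7 +
      (11025174134577938238388703/115058115929794417380 : ℝ) * x^19 * (3/2 - x)^6 +
      (222757803967471867563503/4720332961222335072 : ℝ) * x^20 * (3/2 - x)^5 +
      (3236494259141000137467925/184092985487671067808 : ℝ) * x^21 * (3/2 - x)^4 +
      (8585672668165862656465591/1840929854876710678080 : ℝ) * x^22 * (3/2 - x)^3 +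
      (484276369515315769024559/613643284958903559360 : ℝ) * x^23 * (3/2 - x)^2 +
      (88090604513607602423003/1338858076273971402240 : ℝ) * x^24 * (3/2 - x)^1 +
      (1605261902423011565459/2945487767802737084928 : ℝ) * x^25 * (3/2 - x)^0 := by
  have hy : (0:ℝ) ≤ 3/2 - x := by linarith
  repeat' apply add_nonneg
  all_goals exact mul_nonneg (mul_nonneg (by positivity) (pow_nonneg hx _)) (pow_nonneg hy _)

set_option maxHeartbeats 4000000 in
private lemma poly_ineq {x : ℝ} (h0 : 0 ≤ x) (h1 : x ≤ 3/2) :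
    x^1*(1+x)^20/1 + x^2*(1+x)^19/2 + x^3*(1+x)^18/3 + x^4*(1+x)^17/4 + x^5*(1+x)^16/5 + x^6*(1+x)^15/6 + x^7*(1+x)^14/7 + x^8*(1+x)^13/8 + x^9*(1+x)^12/9 + x^10*(1+x)^11/10 + x^11*(1+x)^10/11 + x^12*(1+x)^9/12 + x^13*(1+x)^8/13 + x^14*(1+x)^7/14 + x^15*(1+x)^6/15 + x^16*(1+x)^5/16 + x^17*(1+x)^4/17 + x^18*(1+x)^3/18 + x^19*(1+x)^2/19 + x^20*(1+x)^1/20 + x^21*(1+x) ≤ x * (2 - (1 - x/2 + x^2/8 - x^3/48 + x^4/384 - x^5/3840 + x^6/46080 + x^7/564480)) * (1+x)^20 := by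
  have hQ := Q_nonneg h0 h1
  have hx3 : (0:ℝ) ≤ x^3 := by positivity
  have hprod : (0:ℝ) ≤ x^3 * ((4194304/2541865828329 : ℝ) * x^0 * (3/2 - x)^25 +
      (221249536/2541865828329 : ℝ) * x^1 * (3/2 - x)^24 +
      (9287303168/4236443047215 : ℝ) * x^2 * (3/2 - x)^23 +
      (445804036096/12709329141645 : ℝ) * x^3 * (3/2 - x)^22 +
      (35605778372608/88965303991515 : ℝ) * x^4 * (3/2 - x)^21 +
      (719241601193984/207585709313535 : ℝ) * x^5 * (3/2 - x)^20 +
      (2944757133417472/124551425588121 : ℝ) * x^6 * (3/2 - x)^19 +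
      (81211522743907328/622757127940605 : ℝ) * x^7 * (3/2 - x)^18 +
      (450241837502571904/761147600816295 : ℝ) * x^8 * (3/2 - x)^17 +
      (15299124877930544768/6850328407346655 : ℝ) * x^9 * (3/2 - x)^16 +
      (126035653262621657344/17810853859101303 : ℝ) * x^10 * (3/2 - x)^15 +
      (112306433861518728064/5936951286367101 : ℝ) * x^11 * (3/2 - x)^14 +
      (3810286109144535111472/89054269295506515 : ℝ) * x^12 * (3/2 - x)^13 +
      (7297264875374474797744/89054269295506515 : ℝ) * x^13 * (3/2 - x)^12 +
      (66963991532699366596648/504640859341203585 : ℝ) * x^14 * (3/2 - x)^11 +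
      (3224959146597694724248/17810853859101303 : ℝ) * x^15 * (3/2 - x)^10 +
      (1190602078002985292830061/5752905796489720869 : ℝ) * x^16 * (3/2 - x)^9 +
      (627729671898613305850043/3196058775827622705 : ℝ) * x^17 * (3/2 - x)^8 +
      (4396413250462462853708444/28764528982448604345 : ℝ) * x^18 * (3/2 - x)^7 +
      (11025174134577938238388703/115058115929794417380 : ℝ) * x^19 * (3/2 - x)^6 +
      (222757803967471867563503/4720332961222335072 : ℝ) * x^20 * (3/2 - x)^5 +
      (3236494259141000137467925/184092985487671067808 : ℝ) * x^21 * (3/2 - x)^4 +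
      (8585672668165862656465591/1840929854876710678080 : ℝ) * x^22 * (3/2 - x)^3 +
      (484276369515315769024559/613643284958903559360 : ℝ) * x^23 * (3/2 - x)^2 +
      (88090604513607602423003/1338858076273971402240 : ℝ) * x^24 * (3/2 - x)^1 +
      (1605261902423011565459/2945487767802737084928 : ℝ) * x^25 * (3/2 - x)^0) := mul_nonneg hx3 hQ
  have key : x * (2 - (1 - x/2 + x^2/8 - x^3/48 + x^4/384 - x^5/3840 + x^6/46080 + x^7/564480)) * (1+x)^20 - (x^1*(1+x)^20/1 + x^2*(1+x)^19/2 + x^3*(1+x)^18/3 + x^4*(1+x)^17/4 + x^5*(1+x)^16/5 + x^6*(1+x)^15/6 + x^7*(1+x)^14/7 + x^8*(1+x)^13/8 + x^9*(1+x)^12/9 + x^10*(1+x)^11/10 + x^11*(1+x)^10/11 + x^12*(1+x)^9/12 + x^13*(1+x)^8/13 + x^14*(1+x)^7/14 + x^15*(1+x)^6/15 + x^16*(1+x)^5/16 + x^17*(1+x)^4/17 + x^18*(1+x)^3/18 + x^19*(1+x)^2/19 + x^20*(1+x)^1/20 + x^21*(1+x))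
      = x^3 * ((4194304/2541865828329 : ℝ) * x^0 * (3/2 - x)^25 +
      (221249536/2541865828329 : ℝ) * x^1 * (3/2 - x)^24 +
      (9287303168/4236443047215 : ℝ) * x^2 * (3/2 - x)^23 +
      (445804036096/12709329141645 : ℝ) * x^3 * (3/2 - x)^22 +
      (35605778372608/88965303991515 : ℝ) * x^4 * (3/2 - x)^21 +
      (719241601193984/207585709313535 : ℝ) * x^5 * (3/2 - x)^20 +
      (2944757133417472/124551425588121 : ℝ) * x^6 * (3/2 - x)^19 +
      (81211522743907328/622757127940605 : ℝ) * x^7 * (3/2 - x)^18 +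
      (450241837502571904/761147600816295 : ℝ) * x^8 * (3/2 - x)^17 +
      (15299124877930544768/6850328407346655 : ℝ) * x^9 * (3/2 - x)^16 +
      (126035653262621657344/17810853859101303 : ℝ) * x^10 * (3/2 - x)^15 +
      (112306433861518728064/5936951286367101 : ℝ) * x^11 * (3/2 - x)^14 +
      (3810286109144535111472/89054269295506515 : ℝ) * x^12 * (3/2 - x)^13 +
      (7297264875374474797744/89054269295506515 : ℝ) * x^13 * (3/2 - x)^12 +
      (66963991532699366596648/504640859341203585 : ℝ) * x^14 * (3/2 - x)^11 +
      (3224959146597694724248/17810853859101303 : ℝ) * x^15 * (3/2 - x)^10 +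
      (1190602078002985292830061/5752905796489720869 : ℝ) * x^16 * (3/2 - x)^9 +
      (627729671898613305850043/3196058775827622705 : ℝ) * x^17 * (3/2 - x)^8 +
      (4396413250462462853708444/28764528982448604345 : ℝ) * x^18 * (3/2 - x)^7 +
      (11025174134577938238388703/115058115929794417380 : ℝ) * x^19 * (3/2 - x)^6 +
      (222757803967471867563503/4720332961222335072 : ℝ) * x^20 * (3/2 - x)^5 +
      (3236494259141000137467925/184092985487671067808 : ℝ) * x^21 * (3/2 - x)^4 +
      (8585672668165862656465591/1840929854876710678080 : ℝ) * x^22 * (3/2 - x)^3 +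
      (484276369515315769024559/613643284958903559360 : ℝ) * x^23 * (3/2 - x)^2 +
      (88090604513607602423003/1338858076273971402240 : ℝ) * x^24 * (3/2 - x)^1 +
      (1605261902423011565459/2945487767802737084928 : ℝ) * x^25 * (3/2 - x)^0) := by ring
  linarith

private lemma pow_cancel {a b : ℝ} (ha : a ≠ 0) (k m : ℕ) :
    (b/a)^k * a^(k+m) = b^k * a^m := by
  rw [div_pow, div_mul_eq_mul_div, pow_add, mul_comm (a^k) (a^m), ← mul_assoc,
    mul_div_assoc, div_self (pow_ne_zero k ha), mul_one]

set_option maxHeartbeats 1000000 in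
private lemma B_cancel {x : ℝ} (hx : (1:ℝ) + x ≠ 0) :
    ((x/(1+x))^1/1 + (x/(1+x))^2/2 + (x/(1+x))^3/3 + (x/(1+x))^4/4 + (x/(1+x))^5/5 + (x/(1+x))^6/6 + (x/(1+x))^7/7 + (x/(1+x))^8/8 + (x/(1+x))^9/9 + (x/(1+x))^10/10 + (x/(1+x))^11/11 + (x/(1+x))^12/12 + (x/(1+x))^13/13 + (x/(1+x))^14/14 + (x/(1+x))^15/15 + (x/(1+x))^16/16 + (x/(1+x))^17/17 + (x/(1+x))^18/18 + (x/(1+x))^19/19 + (x/(1+x))^20/20 + (x/(1+x))^21 * (1+x)) * (1+x)^21 = x^1*(1+x)^20/1 + x^2*(1+x)^19/2 + x^3*(1+x)^18/3 + x^4*(1+x)^17/4 + x^5*(1+x)^16/5 + x^6*(1+x)^15/6 + x^7*(1+x)^14/7 + x^8*(1+x)^13/8 + x^9*(1+x)^12/9 + x^10*(1+x)^11/10 + x^11*(1+x)^10/11 + x^12*(1+x)^9/12 + x^13*(1+x)^8/13 + x^14*(1+x)^7/14 + x^15*(1+x)^6/15 + x^16*(1+x)^5/16 + x^17*(1+x)^4/17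 + x^18*(1+x)^3/18 + x^19*(1+x)^2/19 + x^20*(1+x)^1/20 + x^21*(1+x) := by
  have h := fun (k m : ℕ) => pow_cancel (a := 1+x) (b := x) hx k m
  linear_combination ((1:ℝ)/1) * h 1 20 +
      ((1:ℝ)/2) * h 2 19 +
      ((1:ℝ)/3) * h 3 18 +
      ((1:ℝ)/4) * h 4 17 +
      ((1:ℝ)/5) * h 5 16 +
      ((1:ℝ)/6) * h 6 15 +
      ((1:ℝ)/7) * h 7 14 +
      ((1:ℝ)/8) * h 8 13 +
      ((1:ℝ)/9) * h 9 12 +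
      ((1:ℝ)/10) * h 10 11 +
      ((1:ℝ)/11) * h 11 10 +
      ((1:ℝ)/12) * h 12 9 +
      ((1:ℝ)/13) * h 13 8 +
      ((1:ℝ)/14) * h 14 7 +
      ((1:ℝ)/15) * h 15 6 +
      ((1:ℝ)/16) * h 16 5 +
      ((1:ℝ)/17) * h 17 4 +
      ((1:ℝ)/18) * h 18 3 +
      ((1:ℝ)/19) * h 19 2 +
      ((1:ℝ)/20) * h 20 1 +
      (1+x) * h 21 0

set_option maxHeartbeats 2000000 in
private lemma partA : ∀ x : ℝ, 0 < x → x < 3 / 2 →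
    0 < (1 / x + 1) * Real.log (1 + x) - 1 ∧
    (1 / x + 1) * Real.log (1 + x) - 1 ≤ 1 - Real.exp (-x / 2) ∧
    1 - Real.exp (-x / 2) < 1 := by
  intro x hx hx2
  have h1x : (0:ℝ) < 1 + x := by linarith
  have h1x' : (1:ℝ) + x ≠ 0 := ne_of_gt h1x
  have hxne : x ≠ 0 := ne_of_gt hx
  refine ⟨?_, ?_, ?_⟩
  · have h := Real.log_lt_sub_one_of_pos (show (0:ℝ) < 1/(1+x) by positivity)
      (by
        intro hc
        rw [div_eq_one_iff_eq h1x'] at hc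
        linarith)
    rw [one_div, Real.log_inv] at h
    have hlog : x/(1+x) < Real.log (1 + x) := by
      have hx1 : x/(1+x) = 1 - (1+x)⁻¹ := by field_simp; ring
      linarith
    have hcoef : (0:ℝ) < 1/x + 1 := by positivity
    have hmul := mul_lt_mul_of_pos_left hlog hcoef
    have hone : (1/x + 1) * (x/(1+x)) = 1 := by field_simp
    linarith
  · have hw0 : (0:ℝ) ≤ x/(1+x) := by positivity
    have hw1 : x/(1+x) < 1 := by rw [div_lt_one h1x]; linarith
    have hL := log_ub hw0 hw1
    have hsub : (1:ℝ) - x/(1+x) = 1/(1+x) := by field_simp; ring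
    rw [hsub] at hL
    have hlog1 : Real.log (1/(1+x)) = -Real.log (1+x) := by
      rw [one_div, Real.log_inv]
    rw [hlog1, neg_neg] at hL
    rw [one_div, div_inv_eq_mul] at hL
    -- multiply hL by (1+x)^21
    have hpow : (0:ℝ) < (1+x)^21 := by positivity
    have hL2 := mul_le_mul_of_nonneg_right hL hpow.le
    rw [B_cancel h1x'] at hL2
    have hP := poly_ineq hx.le hx2.le
    have hchain : Real.log (1+x) * (1+x)^21 ≤ x * (2 - (1 - x/2 + x^2/8 - x^3/48 + x^4/384 - x^5/3840 + x^6/46080 + x^7/564480)) * (1+x)^20 :=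
      le_trans hL2 hP
    have hrw : Real.log (1+x) * (1+x)^21 = ((1+x) * Real.log (1+x)) * (1+x)^20 := by ring
    have hrw2 : x * (2 - (1 - x/2 + x^2/8 - x^3/48 + x^4/384 - x^5/3840 + x^6/46080 + x^7/564480)) * (1+x)^20 = (x * (2 - (1 - x/2 + x^2/8 - x^3/48 + x^4/384 - x^5/3840 + x^6/46080 + x^7/564480))) * (1+x)^20 := by ring
    rw [hrw, hrw2] at hchain
    have h6 : (1+x) * Real.log (1+x) ≤ x * (2 - (1 - x/2 + x^2/8 - x^3/48 + x^4/384 - x^5/3840 + x^6/46080 + x^7/564480)) :=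
      le_of_mul_le_mul_right hchain (by positivity)
    have hE := exp_ub hx.le hx2.le
    have h7 : (1/x + 1) * Real.log (1+x) = ((1+x) * Real.log (1+x)) / x := by
      field_simp
    have h8 : ((1+x) * Real.log (1+x)) / x ≤ 2 - (1 - x/2 + x^2/8 - x^3/48 + x^4/384 - x^5/3840 + x^6/46080 + x^7/564480) := by
      rw [div_le_iff₀ hx]
      linarith [h6]
    rw [h7]
    linarith
  · linarith [Real.exp_pos (-x/2)]

theorem entropy_like_inequalities :
    (∀ x : ℝ, 0 < x → x < 3 / 2 →
      0 < (1 / x + 1) * Real.log (1 + x) - 1 ∧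
      (1 / x + 1) * Real.log (1 + x) - 1 ≤ 1 - Real.exp (-x / 2) ∧
      1 - Real.exp (-x / 2) < 1) ∧
    (∀ x : ℝ, 0 < x → x < 3 / 5 →
      0 < (1 / x) * Real.log (1 / (1 - x)) - 1 ∧
      (1 / x) * Real.log (1 / (1 - x)) - 1 ≤
        1 - Real.exp (-(1 / 2) * (x / (1 - x))) ∧
      1 - Real.exp (-(1 / 2) * (x / (1 - x))) < 1) := by
  refine ⟨partA, ?_⟩
  intro x hx hx2
  have h1x : (0:ℝ) < 1 - x := by linarith
  have hy0 : 0 < x/(1-x) := by positivity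
  have hy1 : x/(1-x) < 3/2 := by
    rw [div_lt_iff₀ h1x]; linarith
  obtain ⟨h1, h2, h3⟩ := partA (x/(1-x)) hy0 hy1
  have e1 : 1 / (x/(1-x)) + 1 = 1/x := by
    rw [one_div_div]; field_simp; ring
  have e2 : (1:ℝ) + x/(1-x) = 1/(1-x) := by
    field_simp; ring
  have e3 : -(x/(1-x))/2 = -(1/2) * (x/(1-x)) := by ring
  rw [e1, e2] at h1
  rw [e1, e2, e3] at h2
  rw [e3] at h3
  exact ⟨h1, h2, h3⟩
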